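/- Bounded Possible Answers: Let Q = (W, P) be a positive query with BGP P, and C a set of completeness statements. If C entails the positive crucial statement C⁺_Q = Compl(P | true), then for all graphs G, the possible answers, certain answers, and query result coincide: poss(Q, G, C) = cert(Q, G, C) = ⟦Q⟧_G. -/

import Mathlib

namespace RDF

/-- Terms are variables or constants. -/
abbrev Term (V T : Type) := V ⊕ T
abbrev Triple (V T : Type) := Term V T × Term V T × Term V T
/-- A graph / basic graph pattern is a set of triples (patterns). -/
abbrev Graph (V T : Type) := Set (Triple V T)
abbrev BGP (V T : Type) := Set (Triple V T)
/-- A (partial) mapping from variables to terms. -/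
abbrev Mapping (V T : Type) := V → Option T

variable {V T : Type}

def applyTerm (μ : Mapping V T) : Term V T → Term V T
  | .inl v => (μ v).elim (.inl v) .inr
  | .inr t => .inr t

def applyTriple (μ : Mapping V T) (x : Triple V T) : Triple V T :=
  (applyTerm μ x.1, applyTerm μ x.2.1, applyTerm μ x.2.2)

/-- Instantiation μ(P) of a BGP. -/
def applyBGP (μ : Mapping V T) (P : BGP V T) : BGP V T :=
  applyTriple μ '' P

def dom (μ : Mapping V T) : Set V := {v | μ v ≠ none}

def varsTriple (x : Triple V T) : Set V :=
  {v | x.1 = .inl v ∨ x.2.1 = .inl v ∨ x.2.2 = .inl v}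

def vars (P : BGP V T) : Set V := ⋃ x ∈ P, varsTriple x

/-- ⟦P⟧_G = {μ | dom(μ) = var(P), μ(P) ⊆ G}. -/
def evalBGP (P : BGP V T) (G : Graph V T) : Set (Mapping V T) :=
  {μ | dom μ = vars P ∧ applyBGP μ P ⊆ G}

open Classical in
/-- Restriction μ|_W of a mapping to a set of variables. -/
noncomputable def restrictMap (W : Set V) (μ : Mapping V T) : Mapping V T :=
  fun v => if v ∈ W then μ v else none

/-- Evaluation of a positive query (W, P) with BGP P. -/
def evalPos (W : Set V) (P : BGP V T) (G : Graph V T) : Set (Mapping V T) :=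
  restrictMap W '' evalBGP P G

/-- A completeness statement Compl(pat | cond). -/
structure ComplStmt (V T : Type) where
  pat : BGP V T
  cond : BGP V T

/-- (G,G') ⊨ Compl(P1 | P2)  iff  ⋃{μ(P1) | μ(P1 ∪ P2) ⊆ G'} ⊆ G. -/
def sat (c : ComplStmt V T) (G G' : Graph V T) : Prop :=
  ∀ μ : Mapping V T, applyBGP μ (c.pat ∪ c.cond) ⊆ G' → applyBGP μ c.pat ⊆ G

def satSet (C : Set (ComplStmt V T)) (G G' : Graph V T) : Prop :=
  ∀ c ∈ C, sat c G G'

/-- Valid interpretations ext(G, C). -/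
def ext (G : Graph V T) (C : Set (ComplStmt V T)) : Set (Graph V T) :=
  {G' | G ⊆ G' ∧ satSet C G G'}

/-- Entailment C ⊨ c of a single completeness statement. -/
def entails (C : Set (ComplStmt V T)) (c : ComplStmt V T) : Prop :=
  ∀ G G' : Graph V T, G ⊆ G' → satSet C G G' → sat c G G'

/-- Entailment C ⊨ D of a set of completeness statements. -/
def entailsSet (C D : Set (ComplStmt V T)) : Prop :=
  ∀ G G' : Graph V T, G ⊆ G' → satSet C G G' → satSet D G G'

/-- Evaluation of the pattern P⁺ AND ¬P₁ AND … AND ¬Pₙ over G. -/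
def evalPattern (Pplus : BGP V T) (Ps : List (BGP V T)) (G : Graph V T) :
    Set (Mapping V T) :=
  {μ | μ ∈ evalBGP Pplus G ∧ ∀ Pi ∈ Ps, evalBGP (applyBGP μ Pi) G = ∅}

/-- Evaluation of a query with negation (W, P⁺ AND ¬P₁ … ¬Pₙ). -/
def evalQuery (W : Set V) (Pplus : BGP V T) (Ps : List (BGP V T)) (G : Graph V T) :
    Set (Mapping V T) :=
  restrictMap W '' evalPattern Pplus Ps G

/-- Certain answers w.r.t. completeness statements. -/
def cert {A : Type} (Q : Graph V T → Set A) (G : Graph V T)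
    (C : Set (ComplStmt V T)) : Set A :=
  ⋂ G' ∈ ext G C, Q G'

/-- Possible answers w.r.t. completeness statements. -/
def poss {A : Type} (Q : Graph V T → Set A) (G : Graph V T)
    (C : Set (ComplStmt V T)) : Set A :=
  ⋃ G' ∈ ext G C, Q G'

/-- Bounded Possible Answers: if C ⊨ Compl(P | true) then
    poss = cert = ⟦Q⟧_G for the positive query Q = (W, P). -/
theorem bounded_possible_answers {V T : Type} (W : Set V) (P : BGP V T)
    (hW : W ⊆ vars P) (C : Set (ComplStmt V T))
    (h : entails C ⟨P, (∅ : BGP V T)⟩) :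
    ∀ G : Graph V T,
      poss (evalPos W P) G C = cert (evalPos W P) G C ∧
      cert (evalPos W P) G C = evalPos W P G := by
  intro G
  -- G itself is a valid extension
  have hGmem : G ∈ ext G C := by
    refine ⟨subset_rfl, fun c _ μ hμ => ?_⟩
    exact subset_trans (Set.image_mono Set.subset_union_left) hμ
  -- every G' ∈ ext G C yields the same evaluation
  have key : ∀ G' ∈ ext G C, evalPos W P G' = evalPos W P G := by
    intro G' hG'
    obtain ⟨hsub, hsat⟩ := hG'
    have hs := h G G' hsub hsat
    apply Set.eq_of_subset_of_subset
    · apply Set.image_mono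
      rintro μ ⟨hdom, happ⟩
      refine ⟨hdom, ?_⟩
      have : applyBGP μ (P ∪ (∅ : BGP V T)) ⊆ G' := by
        rwa [Set.union_empty]
      exact hs μ this
    · apply Set.image_mono
      rintro μ ⟨hdom, happ⟩
      exact ⟨hdom, happ.trans hsub⟩
  constructor
  · apply Set.eq_of_subset_of_subset
    · intro a ha
      simp only [poss, Set.mem_iUnion] at ha
      obtain ⟨G', hG', haG'⟩ := ha
      simp only [cert, Set.mem_iInter]
      intro G'' hG''
      rw [key G'' hG'']
      rwa [key G' hG'] at haG'
    · intro a ha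
      simp only [cert, Set.mem_iInter] at ha
      exact Set.mem_biUnion hGmem (ha G hGmem)
  · apply Set.eq_of_subset_of_subset
    · intro a ha
      simp only [cert, Set.mem_iInter] at ha
      exact ha G hGmem
    · intro a ha
      simp only [cert, Set.mem_iInter]
      intro G' hG'
      rwa [key G' hG']

end RDF
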